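/- Let ν be a Borel probability measure on ℝ whose support is contained in [0, B] for some real B ≥ 1, with mean ∫ s dν(s) = 1, and suppose ν is not the Dirac measure at 1. Define g(u) = (u−1)·∫ s/(u−s) dν(s) for u ∈ (B, ∞). Then g is strictly decreasing on (B, ∞). Consequently, for any c > 0 the function κ(u) = c·g(u) is strictly decreasing on (B, ∞). -/
import Mathlib


open MeasureTheory Set

private lemma alg1 {u v s : ℝ} (hus : u - s ≠ 0) (hvs : v - s ≠ 0) :
    (u-1)*(s/(u-s)) - (v-1)*(s/(v-s)) = (v-u)*((s-1)*(s/((u-s)*(v-s)))) := by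
  field_simp
  ring

private lemma alg2 {u v s : ℝ} (hus : u - s ≠ 0) (hvs : v - s ≠ 0)
    (hu1 : u - 1 ≠ 0) (hv1 : v - 1 ≠ 0) :
    (s-1)*(s/((u-s)*(v-s)) - 1/((u-1)*(v-1)))
      = (s-1)^2*(u*v-s)/(((u-s)*(v-s))*((u-1)*(v-1))) := by
  field_simp
  ring

private lemma integ_help (ν : Measure ℝ) [IsFiniteMeasure ν] {B : ℝ}
    (h_ae : ∀ᵐ s ∂ν, s ∈ Set.Icc (0:ℝ) B) {f : ℝ → ℝ} (hf : Measurable f)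
    {C : ℝ} (hC : ∀ s ∈ Set.Icc (0:ℝ) B, |f s| ≤ C) : Integrable f ν := by
  refine (integrable_const C).mono' hf.aestronglyMeasurable ?_
  filter_upwards [h_ae] with s hs
  simpa [Real.norm_eq_abs] using hC s hs

/-- Strict monotonicity of the normalized GIC increment function: if `ν` is a Borel
probability measure supported in `[0, B]` (`B ≥ 1`) with mean `1` and `ν` is not the
Dirac measure at `1`, then `g(u) = (u-1) ∫ s/(u-s) dν(s)` is strictly decreasing on
`(B, ∞)`; consequently so is `κ(u) = c g(u)` for every `c > 0`. -/
theorem stmt4 (B : ℝ) (hB : 1 ≤ B) (ν : Measure ℝ) [IsProbabilityMeasure ν]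
    (hsupp : ν (Set.Icc (0 : ℝ) B)ᶜ = 0)
    (hmean : (∫ s, s ∂ν) = 1)
    (hnotdirac : ν ≠ MeasureTheory.Measure.dirac (1 : ℝ))
    (g : ℝ → ℝ) (hg : ∀ u : ℝ, g u = (u - 1) * ∫ s, s / (u - s) ∂ν) :
    StrictAntiOn g (Set.Ioi B) ∧
      ∀ c : ℝ, 0 < c → StrictAntiOn (fun u => c * g u) (Set.Ioi B) := by
  have h_ae : ∀ᵐ s ∂ν, s ∈ Set.Icc (0:ℝ) B := by
    rw [ae_iff]
    have h : {s : ℝ | ¬ s ∈ Set.Icc (0:ℝ) B} = (Set.Icc (0:ℝ) B)ᶜ := rfl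
    rw [h]; exact hsupp
  have int_id : Integrable (fun s : ℝ => s) ν :=
    integ_help ν h_ae measurable_id (fun s hs => by
      rw [abs_of_nonneg hs.1]; exact hs.2)
  have int_sub1 : Integrable (fun s : ℝ => s - 1) ν := int_id.sub (integrable_const 1)
  have hmean0 : (∫ s, (s - 1) ∂ν) = 0 := by
    rw [integral_sub int_id (integrable_const 1), hmean]
    simp
  have key : StrictAntiOn g (Set.Ioi B) := by
    intro u hu v hv huv
    simp only [Set.mem_Ioi] at hu hv
    have hu1 : (1:ℝ) < u := lt_of_le_of_lt hB hu
    have hv1 : (1:ℝ) < v := lt_of_le_of_lt hB hv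
    have huB : 0 < u - B := by linarith
    have hvB : 0 < v - B := by linarith
    -- integrability of the various integrands
    have intU : Integrable (fun s : ℝ => s/(u-s)) ν := by
      refine integ_help ν h_ae (measurable_id.div (measurable_const.sub measurable_id))
        (C := B/(u-B)) ?_
      rintro s ⟨hs0, hsB⟩
      have hus : 0 < u - s := by linarith
      rw [abs_of_nonneg (div_nonneg hs0 hus.le)]
      exact div_le_div₀ (by linarith) hsB huB (by linarith)
    have intV : Integrable (fun s : ℝ => s/(v-s)) ν := by
      refine integ_help ν h_ae (measurable_id.div (measurable_const.sub measurable_id))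
        (C := B/(v-B)) ?_
      rintro s ⟨hs0, hsB⟩
      have hvs : 0 < v - s := by linarith
      rw [abs_of_nonneg (div_nonneg hs0 hvs.le)]
      exact div_le_div₀ (by linarith) hsB hvB (by linarith)
    have intP : Integrable (fun s : ℝ => (s-1)*(s/((u-s)*(v-s)))) ν := by
      refine integ_help ν h_ae
        ((measurable_id.sub measurable_const).mul (measurable_id.div
          ((measurable_const.sub measurable_id).mul (measurable_const.sub measurable_id))))
        (C := B * (B / ((u-B)*(v-B)))) ?_
      rintro s ⟨hs0, hsB⟩
      have hus : 0 < u - s := by linarith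
      have hvs : 0 < v - s := by linarith
      rw [abs_mul]
      have h1 : |s - 1| ≤ B := abs_le.mpr ⟨by linarith, by linarith⟩
      have h2 : |s/((u-s)*(v-s))| ≤ B/((u-B)*(v-B)) := by
        rw [abs_of_nonneg (div_nonneg hs0 (mul_nonneg hus.le hvs.le))]
        refine div_le_div₀ (by linarith) hsB (mul_pos huB hvB) ?_
        exact mul_le_mul (by linarith) (by linarith) hvB.le hus.le
      exact mul_le_mul h1 h2 (abs_nonneg _) (by linarith)
    have intQ : Integrable (fun s : ℝ => (s-1)*(s/((u-s)*(v-s)) - 1/((u-1)*(v-1)))) ν := by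
      have heq : (fun s : ℝ => (s-1)*(s/((u-s)*(v-s)) - 1/((u-1)*(v-1)))) =
          fun s : ℝ => (s-1)*(s/((u-s)*(v-s))) - (1/((u-1)*(v-1)))*(s-1) := by
        funext s; ring
      rw [heq]
      exact intP.sub (int_sub1.const_mul _)
    -- the key difference identity
    have hdiff : g u - g v = (v - u) * ∫ s, (s-1)*(s/((u-s)*(v-s))) ∂ν := by
      rw [hg u, hg v, ← integral_const_mul, ← integral_const_mul,
        ← integral_sub (intU.const_mul _) (intV.const_mul _), ← integral_const_mul]
      refine integral_congr_ae ?_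
      filter_upwards [h_ae] with s hs
      obtain ⟨hs0, hsB⟩ := hs
      exact alg1 (by intro h; linarith) (by intro h; linarith)
    -- replace integrand using mean zero
    have hIQ : (∫ s, (s-1)*(s/((u-s)*(v-s)) - 1/((u-1)*(v-1))) ∂ν)
        = ∫ s, (s-1)*(s/((u-s)*(v-s))) ∂ν := by
      have heq : (fun s : ℝ => (s-1)*(s/((u-s)*(v-s)) - 1/((u-1)*(v-1)))) =
          fun s : ℝ => (s-1)*(s/((u-s)*(v-s))) - (1/((u-1)*(v-1)))*(s-1) := by
        funext s; ring
      rw [heq, integral_sub intP (int_sub1.const_mul _), integral_const_mul, hmean0]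
      ring
    have hQnonneg : ∀ᵐ s ∂ν, 0 ≤ (s-1)*(s/((u-s)*(v-s)) - 1/((u-1)*(v-1))) := by
      filter_upwards [h_ae] with s hs
      have hus : 0 < u - s := by linarith [hs.2]
      have hvs : 0 < v - s := by linarith [hs.2]
      rw [alg2 hus.ne' hvs.ne' (by linarith) (by linarith)]
      have huv0 : 0 < u*v - s := by nlinarith [hs.2]
      exact div_nonneg (mul_nonneg (sq_nonneg _) huv0.le)
        (mul_nonneg (mul_nonneg hus.le hvs.le)
          (mul_nonneg (by linarith) (by linarith)))
    have hQpos : 0 < ∫ s, (s-1)*(s/((u-s)*(v-s)) - 1/((u-1)*(v-1))) ∂ν := by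
      rcases (integral_nonneg_of_ae hQnonneg).lt_or_eq with h | h
      · exact h
      · exfalso
        apply hnotdirac
        have hq0 : (fun s : ℝ => (s-1)*(s/((u-s)*(v-s)) - 1/((u-1)*(v-1)))) =ᵐ[ν] 0 :=
          (integral_eq_zero_iff_of_nonneg_ae hQnonneg intQ).mp h.symm
        have hone : ∀ᵐ s ∂ν, s = 1 := by
          filter_upwards [h_ae, hq0] with s hs hqs
          have hus : 0 < u - s := by linarith [hs.2]
          have hvs : 0 < v - s := by linarith [hs.2]
          have huv0 : 0 < u*v - s := by nlinarith [hs.2]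
          simp only [Pi.zero_apply] at hqs
          rw [alg2 hus.ne' hvs.ne' (by linarith) (by linarith)] at hqs
          have hden : ((u-s)*(v-s))*((u-1)*(v-1)) ≠ 0 :=
            ne_of_gt (mul_pos (mul_pos hus hvs)
              (mul_pos (by linarith) (by linarith)))
          rcases div_eq_zero_iff.mp hqs with hnum | hd
          · rcases mul_eq_zero.mp hnum with h2 | h3
            · have h4 : s - 1 = 0 := sq_eq_zero_iff.mp h2
              linarith
            · linarith
          · exact absurd hd hden
        have hzero : ν {x : ℝ | x ≠ 1} = 0 := by
          rw [ae_iff] at hone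
          simpa using hone
        ext A hA
        rw [Measure.dirac_apply' _ hA]
        by_cases h1 : (1:ℝ) ∈ A
        · rw [Set.indicator_of_mem h1]
          have hAc : ν Aᶜ = 0 := by
            refine measure_mono_null ?_ hzero
            intro x hx hx1
            exact hx (by rw [hx1]; exact h1)
          have hle : ν A ≤ 1 := prob_le_one
          have hge : (1:ENNReal) ≤ ν A := by
            have h2 : ν Set.univ ≤ ν A + ν Aᶜ := by
              rw [← Set.union_compl_self A]
              exact measure_union_le _ _
            rw [measure_univ, hAc, add_zero] at h2
            exact h2
          simpa using le_antisymm hle hge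
        · rw [Set.indicator_of_notMem h1]
          refine measure_mono_null ?_ hzero
          intro x hx hx1
          exact h1 (by rw [← hx1]; exact hx)
    -- conclude
    have hPpos : 0 < ∫ s, (s-1)*(s/((u-s)*(v-s))) ∂ν := hIQ ▸ hQpos
    have : 0 < g u - g v := by
      rw [hdiff]
      exact mul_pos (by linarith) hPpos
    linarith
  exact ⟨key, fun c hc x hx y hy hxy => mul_lt_mul_of_pos_left (key hx hy hxy) hc⟩
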